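/- Let a²,b²,c² > 0, k ∈ ℤ∖{0}, 0 < R < ∞, and let w₀, w₁, w₂ : [0,R] → ℝ be continuous on [0,R] and C¹ on (0,R), with ∫₀^R [w₀'(r)² + w₁'(r)² + w₂'(r)²] r dr < ∞ and ∫₀^R (w₁(r)² + w₂(r)²)/r dr < ∞. Define Q : B_R → S₀ by Q(x) = w₀(r)E₀ + w₁(r)E₁(φ) + w₂(r)E₂(φ). Then the Landau–de Gennes energy satisfies ∫_{B_R} [ (1/2)|∇Q|² + f_bulk(Q) ] dx = 2π ∫₀^R { (1/2)[ w₀'² + w₁'² + w₂'² + (k²/r²)(w₁² + w₂²) ] − (a²/2)(w₀² + w₁² + w₂²) + (c²/4)(w₀² + w₁² + w₂²)² − (b²/(3√6)) w₀ (w₀² − 3(w₁² + w₂²)) } r dr. -/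

import Mathlib

open Real Matrix
open scoped ENNReal

noncomputable section

abbrev Mat3 := Matrix (Fin 3) (Fin 3) ℝ

/-- `Q` is a symmetric traceless 3×3 real matrix, i.e. an element of `S₀`. -/
def isS0 (Q : Mat3) : Prop := Qᵀ = Q ∧ Q.trace = 0

def e1 : Fin 3 → ℝ := ![1, 0, 0]
def e2 : Fin 3 → ℝ := ![0, 1, 0]
def e3 : Fin 3 → ℝ := ![0, 0, 1]

/-- `n(φ) = (cos(kφ/2), sin(kφ/2), 0)`. -/
def nvec (k : ℤ) (φ : ℝ) : Fin 3 → ℝ := ![Real.cos ((k : ℝ) * φ / 2), Real.sin ((k : ℝ) * φ / 2), 0]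

/-- `m(φ) = (−sin(kφ/2), cos(kφ/2), 0)`. -/
def mvec (k : ℤ) (φ : ℝ) : Fin 3 → ℝ := ![-Real.sin ((k : ℝ) * φ / 2), Real.cos ((k : ℝ) * φ / 2), 0]

/-- `I₂ = I₃ − e₃ ⊗ e₃`. -/
def I2 : Mat3 := 1 - vecMulVec e3 e3

def E0 : Mat3 := Real.sqrt (3/2) • (vecMulVec e3 e3 - (1/3 : ℝ) • (1 : Mat3))
def E1 (k : ℤ) (φ : ℝ) : Mat3 :=
  Real.sqrt 2 • (vecMulVec (nvec k φ) (nvec k φ) - (1/2 : ℝ) • I2)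
def E2mat (k : ℤ) (φ : ℝ) : Mat3 :=
  (Real.sqrt 2)⁻¹ • (vecMulVec (nvec k φ) (mvec k φ) + vecMulVec (mvec k φ) (nvec k φ))
def E3mat : Mat3 := (Real.sqrt 2)⁻¹ • (vecMulVec e1 e3 + vecMulVec e3 e1)
def E4mat : Mat3 := (Real.sqrt 2)⁻¹ • (vecMulVec e2 e3 + vecMulVec e3 e2)

/-- The rotation `R_k(ψ)` of winding `k/2` about the vertical axis. -/
def Rk (k : ℤ) (ψ : ℝ) : Mat3 :=
  !![Real.cos ((k : ℝ) * ψ / 2), -Real.sin ((k : ℝ) * ψ / 2), 0;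
     Real.sin ((k : ℝ) * ψ / 2),  Real.cos ((k : ℝ) * ψ / 2), 0;
     0, 0, 1]

/-- The Landau-de Gennes bulk potential. -/
def fbulk (a2 b2 c2 : ℝ) (Q : Mat3) : ℝ :=
  -(a2/2) * (Q*Q).trace - (b2/3) * (Q*Q*Q).trace + (c2/4) * ((Q*Q).trace)^2

/-- The constant `s₊ = (b² + √(b⁴ + 24a²c²))/(4c²)`. -/
def splus (a2 b2 c2 : ℝ) : ℝ := (b2 + Real.sqrt (b2^2 + 24*a2*c2)) / (4*c2)

/-- Laplacian of a scalar function on `ℝ²`, as the sum of the two repeated partial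
derivatives along the coordinate axes. -/
def lap (f : ℝ × ℝ → ℝ) (p : ℝ × ℝ) : ℝ :=
  deriv (fun t => deriv (fun s => f (s, p.2)) t) p.1 +
  deriv (fun t => deriv (fun s => f (p.1, s)) t) p.2

/-- Componentwise Laplacian of a matrix-valued map on `ℝ²`. -/
def matLap (Q : ℝ × ℝ → Mat3) (p : ℝ × ℝ) : Mat3 :=
  Matrix.of fun i j => lap (fun x => Q x i j) p

/-- Squared norm of the gradient of a scalar function on `ℝ²`. -/
def gradNormSq (f : ℝ × ℝ → ℝ) (p : ℝ × ℝ) : ℝ :=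
  (fderiv ℝ f p (1, 0))^2 + (fderiv ℝ f p (0, 1))^2

/-- `|∇Q|²`: sum over all matrix entries of the squared norms of their gradients. -/
def matGradNormSq (Q : ℝ × ℝ → Mat3) (p : ℝ × ℝ) : ℝ :=
  ∑ i, ∑ j, gradNormSq (fun x => Q x i j) p

/-- Membership in the open disk of radius `R ∈ (0,∞]` centered at the origin. -/
def inBall (R : ℝ≥0∞) (x : ℝ × ℝ) : Prop :=
  ENNReal.ofReal (Real.sqrt (x.1^2 + x.2^2)) < R

/-- The right-hand side of the Euler–Lagrange equation
`ΔQ = −a²Q − b²(Q² − (1/3)|Q|²I₃) + c²|Q|²Q`. -/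
def ELrhs (a2 b2 c2 : ℝ) (A : Mat3) : Mat3 :=
  -a2 • A - b2 • (A * A - ((1/3 : ℝ) * (A * A).trace) • (1 : Mat3)) + (c2 * (A * A).trace) • A

/-- Frobenius squared norm of a 3×3 matrix. -/
def frobSq (A : Mat3) : ℝ := ∑ i, ∑ j, (A i j)^2

/-- For `x = (x₁,x₂) ∈ ℝ²`, `x̃ = (x₁,x₂,0) ∈ ℝ³`. -/
def tilde (x : ℝ × ℝ) : Fin 3 → ℝ := ![x.1, x.2, 0]

/-- The projection `P₂(x₁,x₂,x₃) = (x₁,x₂)`. -/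
def P2 (v : Fin 3 → ℝ) : ℝ × ℝ := (v 0, v 1)

/-- The antisymmetric matrix `S₀ = e₂⊗e₁ − e₁⊗e₂`. -/
def S0mat : Mat3 := vecMulVec e2 e1 - vecMulVec e1 e2

end
namespace Stmt11Aux
open Real Matrix

noncomputable section

lemma s2 : Real.sqrt 2 * Real.sqrt 2 = 2 := Real.mul_self_sqrt (by norm_num)
lemma s3 : Real.sqrt 3 * Real.sqrt 3 = 3 := Real.mul_self_sqrt (by norm_num)
lemma s6 : Real.sqrt 6 * Real.sqrt 6 = 6 := Real.mul_self_sqrt (by norm_num)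
lemma s2pos : (0:ℝ) < Real.sqrt 2 := Real.sqrt_pos.2 (by norm_num)
lemma s3pos : (0:ℝ) < Real.sqrt 3 := Real.sqrt_pos.2 (by norm_num)
lemma s6pos : (0:ℝ) < Real.sqrt 6 := Real.sqrt_pos.2 (by norm_num)
lemma sqrt6_eq : Real.sqrt 6 = Real.sqrt 2 * Real.sqrt 3 := by
  rw [show (6:ℝ) = 2*3 by norm_num, Real.sqrt_mul (by norm_num)]
lemma i2 : (Real.sqrt 2)⁻¹ * (Real.sqrt 2)⁻¹ = 1/2 := by
  rw [← mul_inv, s2]; norm_num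
lemma i6 : (Real.sqrt 6)⁻¹ * (Real.sqrt 6)⁻¹ = 1/6 := by
  rw [← mul_inv, s6]; norm_num
lemma lc2 : Real.sqrt 2 * (1/2) = (Real.sqrt 2)⁻¹ := by
  field_simp
  exact Real.sq_sqrt (by norm_num)
lemma lc6 : Real.sqrt 3 / Real.sqrt 2 * (1/3) = (Real.sqrt 6)⁻¹ := by
  rw [sqrt6_eq, mul_inv]
  field_simp
  exact Real.sq_sqrt (by norm_num)
lemma h32 : Real.sqrt ((3:ℝ)/2) = Real.sqrt 3 / Real.sqrt 2 :=
  Real.sqrt_div (by norm_num) 2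

lemma combo_eq (k : ℤ) (v u0 u1 u2 : ℝ) :
    u0 • E0 + u1 • E1 k v + u2 • E2mat k v =
    !![-u0/Real.sqrt 6 + (u1 * Real.cos ((k:ℝ)*v) - u2 * Real.sin ((k:ℝ)*v))/Real.sqrt 2,
        (u1 * Real.sin ((k:ℝ)*v) + u2 * Real.cos ((k:ℝ)*v))/Real.sqrt 2, 0;
        (u1 * Real.sin ((k:ℝ)*v) + u2 * Real.cos ((k:ℝ)*v))/Real.sqrt 2,
        -u0/Real.sqrt 6 - (u1 * Real.cos ((k:ℝ)*v) - u2 * Real.sin ((k:ℝ)*v))/Real.sqrt 2, 0;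
        0, 0, 2*u0/Real.sqrt 6] := by
  have hcc : Real.cos ((k:ℝ)*v/2) * Real.cos ((k:ℝ)*v/2) = 1/2 + Real.cos ((k:ℝ)*v)/2 := by
    have h := Real.cos_sq ((k:ℝ)*v/2)
    rw [show 2*((k:ℝ)*v/2) = (k:ℝ)*v by ring] at h
    nlinarith [h]
  have hss : Real.sin ((k:ℝ)*v/2) * Real.sin ((k:ℝ)*v/2) = 1/2 - Real.cos ((k:ℝ)*v)/2 := by
    have h := Real.sin_sq_add_cos_sq ((k:ℝ)*v/2); nlinarith [hcc]
  have hsc : Real.sin ((k:ℝ)*v/2) * Real.cos ((k:ℝ)*v/2) = Real.sin ((k:ℝ)*v)/2 := by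
    have h := Real.sin_two_mul ((k:ℝ)*v/2)
    rw [show 2*((k:ℝ)*v/2) = (k:ℝ)*v by ring] at h; linarith
  set C := Real.cos ((k:ℝ)*v) with hCdef
  set S := Real.sin ((k:ℝ)*v) with hSdef
  ext i j
  fin_cases i <;> fin_cases j <;>
    simp only [Matrix.add_apply, Matrix.smul_apply, Matrix.sub_apply, E0, E1, E2mat, I2, h32,
      vecMulVec_apply, nvec, mvec, e3, Matrix.one_apply, smul_eq_mul, Matrix.cons_val',
      Matrix.cons_val_zero, Matrix.cons_val_one, Matrix.head_cons, Matrix.empty_val',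
      Matrix.cons_val_fin_one, Matrix.head_fin_const] <;>
    norm_num [Fin.ext_iff]
  · linear_combination (-u0)*lc6 + (u1*Real.sqrt 2)*hcc + (u1*C)*lc2
      + (-u2*(Real.sqrt 2)⁻¹)*(mul_comm (Real.cos ((k:ℝ)*v/2)) (Real.sin ((k:ℝ)*v/2)))
      + (-2*u2*(Real.sqrt 2)⁻¹)*hsc + (u2*S)*(lc2.symm.trans lc2)
  · linear_combination (u1*Real.sqrt 2)*hsc + (u1*S)*lc2
      + (u2*(Real.sqrt 2)⁻¹)*hcc + (-u2*(Real.sqrt 2)⁻¹)*hss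
  · linear_combination (u1*Real.sqrt 2)*hsc + (u1*S)*lc2
      + (u2*(Real.sqrt 2)⁻¹)*hcc + (-u2*(Real.sqrt 2)⁻¹)*hss
  · linear_combination (-u0)*lc6 + (u1*Real.sqrt 2)*hss + (-u1*C)*lc2
      + (2*u2*(Real.sqrt 2)⁻¹)*hsc
  · linear_combination 2*u0*lc6
lemma trace_sq_form (x y z t : ℝ) :
    ((!![x,y,0;y,z,0;0,0,t] : Mat3) * !![x,y,0;y,z,0;0,0,t]).trace = x^2+z^2+2*y^2+t^2 := by
  rw [Matrix.mul_fin_three, Matrix.trace_fin_three_of]; ring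

lemma trace_cube_form (x y z t : ℝ) :
    ((!![x,y,0;y,z,0;0,0,t] : Mat3) * !![x,y,0;y,z,0;0,0,t] * !![x,y,0;y,z,0;0,0,t]).trace
      = x^3+z^3+3*y^2*(x+z)+t^3 := by
  rw [Matrix.mul_fin_three, Matrix.mul_fin_three, Matrix.trace_fin_three_of]; ring

lemma fbulk_val (a2 b2 c2 : ℝ) (k : ℤ) (v u0 u1 u2 : ℝ) :
    fbulk a2 b2 c2 (u0 • E0 + u1 • E1 k v + u2 • E2mat k v) =
      - a2/2 * (u0^2+u1^2+u2^2) + c2/4 * (u0^2+u1^2+u2^2)^2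
      - b2 / (3 * Real.sqrt 6) * (u0 * (u0^2 - 3*(u1^2+u2^2))) := by
  have hCS : Real.cos ((k:ℝ)*v)^2 + Real.sin ((k:ℝ)*v)^2 = 1 := by
    rw [add_comm]; exact Real.sin_sq_add_cos_sq _
  set C := Real.cos ((k:ℝ)*v)
  set S := Real.sin ((k:ℝ)*v)
  rw [fbulk, combo_eq, trace_sq_form, trace_cube_form]
  have h1 : (-u0/Real.sqrt 6 + (u1 * C - u2 * S)/Real.sqrt 2)^2
      + (-u0/Real.sqrt 6 - (u1 * C - u2 * S)/Real.sqrt 2)^2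
      + 2*((u1 * S + u2 * C)/Real.sqrt 2)^2 + (2*u0/Real.sqrt 6)^2 = u0^2+u1^2+u2^2 := by
    linear_combination (6*u0^2)*i6 + (2*((u1*C-u2*S)^2+(u1*S+u2*C)^2))*i2 + (u1^2+u2^2)*hCS
  have h2 : (-u0/Real.sqrt 6 + (u1 * C - u2 * S)/Real.sqrt 2)^3
      + (-u0/Real.sqrt 6 - (u1 * C - u2 * S)/Real.sqrt 2)^3
      + 3*((u1 * S + u2 * C)/Real.sqrt 2)^2
        * ((-u0/Real.sqrt 6 + (u1 * C - u2 * S)/Real.sqrt 2)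
          + (-u0/Real.sqrt 6 - (u1 * C - u2 * S)/Real.sqrt 2))
      + (2*u0/Real.sqrt 6)^3 = (u0^3 - 3*u0*(u1^2+u2^2))/Real.sqrt 6 := by
    linear_combination (6*u0^3*(Real.sqrt 6)⁻¹)*i6
      + (-6*u0*(Real.sqrt 6)⁻¹*((u1*C-u2*S)^2+(u1*S+u2*C)^2))*i2
      + (-3*u0*(Real.sqrt 6)⁻¹*(u1^2+u2^2))*hCS
  rw [h1, h2]
  ring
def Lrot (a b : ℝ) : ℝ × ℝ →L[ℝ] ℝ :=
  a • ContinuousLinearMap.fst ℝ ℝ ℝ + b • ContinuousLinearMap.snd ℝ ℝ ℝ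

@[simp] lemma Lrot_apply (a b : ℝ) (v : ℝ × ℝ) : Lrot a b v = a * v.1 + b * v.2 := by
  simp [Lrot]

lemma norm_polar (r θ : ℝ) (hr : 0 ≤ r) :
    Real.sqrt ((r * Real.cos θ)^2 + (r * Real.sin θ)^2) = r := by
  rw [show (r * Real.cos θ)^2 + (r * Real.sin θ)^2 = r^2 by
    linear_combination r^2 * (Real.sin_sq_add_cos_sq θ)]
  exact Real.sqrt_sq hr

lemma hasFDerivAt_rho (r θ : ℝ) (hr : 0 < r) :
    HasFDerivAt (fun x : ℝ × ℝ => Real.sqrt (x.1^2 + x.2^2))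
      (Lrot (Real.cos θ) (Real.sin θ)) (r * Real.cos θ, r * Real.sin θ) := by
  set x₀ : ℝ × ℝ := (r * Real.cos θ, r * Real.sin θ) with hx₀
  have hfst : HasFDerivAt (fun x : ℝ × ℝ => x.1) (ContinuousLinearMap.fst ℝ ℝ ℝ) x₀ :=
    hasFDerivAt_fst
  have hsnd : HasFDerivAt (fun x : ℝ × ℝ => x.2) (ContinuousLinearMap.snd ℝ ℝ ℝ) x₀ :=
    hasFDerivAt_snd
  have hq : HasFDerivAt (fun x : ℝ × ℝ => x.1^2 + x.2^2)
      ((x₀.1 • ContinuousLinearMap.fst ℝ ℝ ℝ + x₀.1 • ContinuousLinearMap.fst ℝ ℝ ℝ) +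
        (x₀.2 • ContinuousLinearMap.snd ℝ ℝ ℝ + x₀.2 • ContinuousLinearMap.snd ℝ ℝ ℝ)) x₀ := by
    have h1 := hfst.mul hfst
    have h2 := hsnd.mul hsnd
    have := h1.add h2
    simp only [Pi.mul_def, Pi.add_def] at this
    exact this.congr_of_eventuallyEq (Filter.Eventually.of_forall fun x => by beta_reduce; ring)
  have hpos : x₀.1^2 + x₀.2^2 ≠ 0 := by
    have : x₀.1^2 + x₀.2^2 = r^2 := by
      simp only [hx₀]; linear_combination r^2 * (Real.sin_sq_add_cos_sq θ)
    rw [this]; positivity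
  have hs : HasDerivAt Real.sqrt (1 / (2 * Real.sqrt (x₀.1^2 + x₀.2^2))) (x₀.1^2 + x₀.2^2) :=
    Real.hasDerivAt_sqrt hpos
  have hcomp := hs.comp_hasFDerivAt x₀ hq
  have hrt : Real.sqrt (x₀.1^2 + x₀.2^2) = r := norm_polar r θ hr.le
  have hL : ((1 / (2 * Real.sqrt (x₀.1^2 + x₀.2^2))) •
      ((x₀.1 • ContinuousLinearMap.fst ℝ ℝ ℝ + x₀.1 • ContinuousLinearMap.fst ℝ ℝ ℝ) +
        (x₀.2 • ContinuousLinearMap.snd ℝ ℝ ℝ + x₀.2 • ContinuousLinearMap.snd ℝ ℝ ℝ)))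
      = Lrot (Real.cos θ) (Real.sin θ) := by
    apply ContinuousLinearMap.ext; intro v
    simp only [ContinuousLinearMap.smul_apply, ContinuousLinearMap.add_apply,
      ContinuousLinearMap.coe_fst', ContinuousLinearMap.coe_snd', smul_eq_mul, Lrot_apply, hrt,
      hx₀]
    rw [norm_polar r θ hr.le]
    field_simp
    ring
  rw [hL] at hcomp
  exact hcomp

lemma hasFDerivAt_psi (r θ : ℝ) (hr : 0 < r) :
    HasFDerivAt (fun x : ℝ × ℝ => θ + Real.arctan
        ((-Real.sin θ * x.1 + Real.cos θ * x.2) / (Real.cos θ * x.1 + Real.sin θ * x.2)))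
      (Lrot (-Real.sin θ / r) (Real.cos θ / r)) (r * Real.cos θ, r * Real.sin θ) := by
  set x₀ : ℝ × ℝ := (r * Real.cos θ, r * Real.sin θ) with hx₀
  have hfst : HasFDerivAt (fun x : ℝ × ℝ => x.1) (ContinuousLinearMap.fst ℝ ℝ ℝ) x₀ :=
    hasFDerivAt_fst
  have hsnd : HasFDerivAt (fun x : ℝ × ℝ => x.2) (ContinuousLinearMap.snd ℝ ℝ ℝ) x₀ :=
    hasFDerivAt_snd
  have hg : HasFDerivAt (fun x : ℝ × ℝ => -Real.sin θ * x.1 + Real.cos θ * x.2)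
      (Lrot (-Real.sin θ) (Real.cos θ)) x₀ :=
    (hfst.const_mul (-Real.sin θ)).add (hsnd.const_mul (Real.cos θ))
  have hh : HasFDerivAt (fun x : ℝ × ℝ => Real.cos θ * x.1 + Real.sin θ * x.2)
      (Lrot (Real.cos θ) (Real.sin θ)) x₀ :=
    (hfst.const_mul (Real.cos θ)).add (hsnd.const_mul (Real.sin θ))
  have hhx : Real.cos θ * x₀.1 + Real.sin θ * x₀.2 = r := by
    simp only [hx₀]; linear_combination r * (Real.sin_sq_add_cos_sq θ)
  have hgx : -Real.sin θ * x₀.1 + Real.cos θ * x₀.2 = 0 := by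
    simp only [hx₀]; ring
  have hinv : HasDerivAt (fun y : ℝ => y⁻¹) (-(r^2)⁻¹)
      ((fun x : ℝ × ℝ => Real.cos θ * x.1 + Real.sin θ * x.2) x₀) := by
    show HasDerivAt (fun y : ℝ => y⁻¹) (-(r^2)⁻¹) (Real.cos θ * x₀.1 + Real.sin θ * x₀.2)
    rw [hhx]
    exact hasDerivAt_inv hr.ne'
  have hinvc := hinv.comp_hasFDerivAt x₀ hh
  have hq : HasFDerivAt (fun x : ℝ × ℝ =>
      (-Real.sin θ * x.1 + Real.cos θ * x.2) * ((Real.cos θ * x.1 + Real.sin θ * x.2))⁻¹)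
      ((-Real.sin θ * x₀.1 + Real.cos θ * x₀.2) • (-(r^2)⁻¹ • Lrot (Real.cos θ) (Real.sin θ)) +
        ((Real.cos θ * x₀.1 + Real.sin θ * x₀.2))⁻¹ • Lrot (-Real.sin θ) (Real.cos θ)) x₀ :=
    hg.mul hinvc
  have harc := (Real.hasDerivAt_arctan (((fun x : ℝ × ℝ =>
      (-Real.sin θ * x.1 + Real.cos θ * x.2) * ((Real.cos θ * x.1 + Real.sin θ * x.2))⁻¹)) x₀
      )).comp_hasFDerivAt x₀ hq
  have hfinal := harc.const_add θ
  have hL : ((1 / (1 + ((-Real.sin θ * x₀.1 + Real.cos θ * x₀.2) *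
        ((Real.cos θ * x₀.1 + Real.sin θ * x₀.2))⁻¹)^2)) •
      ((-Real.sin θ * x₀.1 + Real.cos θ * x₀.2) • (-(r^2)⁻¹ • Lrot (Real.cos θ) (Real.sin θ)) +
        ((Real.cos θ * x₀.1 + Real.sin θ * x₀.2))⁻¹ • Lrot (-Real.sin θ) (Real.cos θ)))
      = Lrot (-Real.sin θ / r) (Real.cos θ / r) := by
    apply ContinuousLinearMap.ext; intro v
    simp only [ContinuousLinearMap.smul_apply, ContinuousLinearMap.add_apply, smul_eq_mul,
      Lrot_apply, hhx, hgx]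
    field_simp
    ring
  have : HasFDerivAt (fun x : ℝ × ℝ => θ + Real.arctan
      ((-Real.sin θ * x.1 + Real.cos θ * x.2) * ((Real.cos θ * x.1 + Real.sin θ * x.2))⁻¹))
      (Lrot (-Real.sin θ / r) (Real.cos θ / r)) x₀ := by
    rw [← hL]; exact hfinal
  simpa only [div_eq_mul_inv] using this
lemma polar_repr (θ : ℝ) (x : ℝ × ℝ) (hx : 0 < Real.cos θ * x.1 + Real.sin θ * x.2) :
    0 < Real.sqrt (x.1^2 + x.2^2) ∧
    Real.sqrt (x.1^2 + x.2^2) * Real.cos (θ + Real.arctan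
      ((-Real.sin θ * x.1 + Real.cos θ * x.2) / (Real.cos θ * x.1 + Real.sin θ * x.2))) = x.1 ∧
    Real.sqrt (x.1^2 + x.2^2) * Real.sin (θ + Real.arctan
      ((-Real.sin θ * x.1 + Real.cos θ * x.2) / (Real.cos θ * x.1 + Real.sin θ * x.2))) = x.2
    := by
  set g := -Real.sin θ * x.1 + Real.cos θ * x.2 with hgdef
  set h := Real.cos θ * x.1 + Real.sin θ * x.2 with hhdef
  have h1 : h^2 + g^2 = x.1^2 + x.2^2 := by
    simp only [hgdef, hhdef]
    linear_combination (x.1^2 + x.2^2) * (Real.sin_sq_add_cos_sq θ)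
  have hsum : 0 < x.1^2 + x.2^2 := by nlinarith [sq_nonneg g, hx]
  set ρ := Real.sqrt (x.1^2 + x.2^2) with hρdef
  have hρ : 0 < ρ := Real.sqrt_pos.2 hsum
  have hρ2 : ρ^2 = x.1^2 + x.2^2 := Real.sq_sqrt hsum.le
  have h1t2 : 1 + (g/h)^2 = (ρ/h)^2 := by
    field_simp
    linear_combination h1 - hρ2
  have e1 : (1:ℝ)/(ρ/h) = h/ρ := one_div_div _ _
  have hhne : h ≠ 0 := ne_of_gt hx
  have hρne : ρ ≠ 0 := ne_of_gt hρ
  have e2 : g/h/(ρ/h) = g/ρ := by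
    rw [div_div, mul_div_assoc']
    rw [mul_comm h ρ, mul_div_assoc, div_self hhne, mul_one]
  refine ⟨hρ, ?_, ?_⟩
  · rw [Real.cos_add, Real.cos_arctan, Real.sin_arctan, h1t2,
      Real.sqrt_sq (by positivity), e1, e2]
    have hch : Real.cos θ * h - Real.sin θ * g = x.1 := by
      simp only [hgdef, hhdef]
      linear_combination x.1 * (Real.sin_sq_add_cos_sq θ)
    field_simp
    linear_combination hch
  · rw [Real.sin_add, Real.cos_arctan, Real.sin_arctan, h1t2,
      Real.sqrt_sq (by positivity), e1, e2]
    have hch : Real.sin θ * h + Real.cos θ * g = x.2 := by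
      simp only [hgdef, hhdef]
      linear_combination x.2 * (Real.sin_sq_add_cos_sq θ)
    field_simp
    linear_combination hch

lemma grad_val (k : ℤ) (R : ℝ) (w₀ w₁ w₂ : ℝ → ℝ)
    (hd₀ : ContDiffOn ℝ 1 w₀ (Set.Ioo 0 R)) (hd₁ : ContDiffOn ℝ 1 w₁ (Set.Ioo 0 R))
    (hd₂ : ContDiffOn ℝ 1 w₂ (Set.Ioo 0 R))
    (Q : ℝ × ℝ → Mat3)
    (hQ : ∀ r φ : ℝ, 0 < r → r < R →
      Q (r * Real.cos φ, r * Real.sin φ) = w₀ r • E0 + w₁ r • E1 k φ + w₂ r • E2mat k φ)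
    (r θ : ℝ) (hr : 0 < r) (hrR : r < R) :
    matGradNormSq Q (r * Real.cos θ, r * Real.sin θ) =
      (deriv w₀ r)^2 + (deriv w₁ r)^2 + (deriv w₂ r)^2
        + (k:ℝ)^2/r^2 * ((w₁ r)^2 + (w₂ r)^2) := by
  have hRpos : 0 < R := hr.trans hrR
  set x₀ : ℝ × ℝ := (r * Real.cos θ, r * Real.sin θ) with hx₀def
  -- the open neighbourhood
  have hNopen : IsOpen {y : ℝ × ℝ | 0 < Real.cos θ * y.1 + Real.sin θ * y.2 ∧
      y.1^2 + y.2^2 < R^2} := by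
    rw [Set.setOf_and]
    exact (isOpen_lt continuous_const
        ((continuous_const.mul continuous_fst).add (continuous_const.mul continuous_snd))).inter
      (isOpen_lt ((continuous_fst.pow 2).add (continuous_snd.pow 2)) continuous_const)
  have hx₀N : x₀ ∈ {y : ℝ × ℝ | 0 < Real.cos θ * y.1 + Real.sin θ * y.2 ∧
      y.1^2 + y.2^2 < R^2} := by
    constructor
    · show 0 < Real.cos θ * (r * Real.cos θ) + Real.sin θ * (r * Real.sin θ)
      have : Real.cos θ * (r * Real.cos θ) + Real.sin θ * (r * Real.sin θ) = r := by
        linear_combination r * (Real.sin_sq_add_cos_sq θ)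
      rw [this]; exact hr
    · show (r * Real.cos θ)^2 + (r * Real.sin θ)^2 < R^2
      have : (r * Real.cos θ)^2 + (r * Real.sin θ)^2 = r^2 := by
        linear_combination r^2 * (Real.sin_sq_add_cos_sq θ)
      rw [this]
      exact pow_lt_pow_left₀ hrR hr.le two_ne_zero
  -- the local representation of Q
  have key : ∀ x ∈ {y : ℝ × ℝ | 0 < Real.cos θ * y.1 + Real.sin θ * y.2 ∧
      y.1^2 + y.2^2 < R^2}, Q x =
      !![-(w₀ (Real.sqrt (x.1^2 + x.2^2)))/Real.sqrt 6 + (w₁ (Real.sqrt (x.1^2 + x.2^2)) * Real.cos ((k:ℝ) * (θ + Real.arctan ((-Real.sin θ * x.1 + Real.cos θ * x.2) / (Real.cos θ * x.1 + Real.sin θ * x.2)))) - w₂ (Real.sqrt (x.1^2 + x.2^2)) * Real.sin ((k:ℝ) * (θ + Real.arctan ((-Real.sin θ * x.1 + Real.cos θ * x.2) / (Real.cos θ * x.1 + Real.sin θ * x.2)))))/Real.sqrt 2,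
          (w₁ (Real.sqrt (x.1^2 + x.2^2)) * Real.sin ((k:ℝ) * (θ + Real.arctan ((-Real.sin θ * x.1 + Real.cos θ * x.2) / (Real.cos θ * x.1 + Real.sin θ * x.2)))) + w₂ (Real.sqrt (x.1^2 + x.2^2)) * Real.cos ((k:ℝ) * (θ + Real.arctan ((-Real.sin θ * x.1 + Real.cos θ * x.2) / (Real.cos θ * x.1 + Real.sin θ * x.2)))))/Real.sqrt 2, 0;
          (w₁ (Real.sqrt (x.1^2 + x.2^2)) * Real.sin ((k:ℝ) * (θ + Real.arctan ((-Real.sin θ * x.1 + Real.cos θ * x.2) / (Real.cos θ * x.1 + Real.sin θ * x.2)))) + w₂ (Real.sqrt (x.1^2 + x.2^2)) * Real.cos ((k:ℝ) * (θ + Real.arctan ((-Real.sin θ * x.1 + Real.cos θ * x.2) / (Real.cos θ * x.1 + Real.sin θ * x.2)))))/Real.sqrt 2,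
          -(w₀ (Real.sqrt (x.1^2 + x.2^2)))/Real.sqrt 6 - (w₁ (Real.sqrt (x.1^2 + x.2^2)) * Real.cos ((k:ℝ) * (θ + Real.arctan ((-Real.sin θ * x.1 + Real.cos θ * x.2) / (Real.cos θ * x.1 + Real.sin θ * x.2)))) - w₂ (Real.sqrt (x.1^2 + x.2^2)) * Real.sin ((k:ℝ) * (θ + Real.arctan ((-Real.sin θ * x.1 + Real.cos θ * x.2) / (Real.cos θ * x.1 + Real.sin θ * x.2)))))/Real.sqrt 2, 0;
          0, 0, 2*(w₀ (Real.sqrt (x.1^2 + x.2^2)))/Real.sqrt 6] := by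
    intro x hx
    obtain ⟨hρpos, h1, h2⟩ := polar_repr θ x hx.1
    have hρR : Real.sqrt (x.1^2 + x.2^2) < R := by
      rw [show R = Real.sqrt (R^2) from (Real.sqrt_sq hRpos.le).symm]
      exact Real.sqrt_lt_sqrt (by positivity) hx.2
    have hxeq : x = (Real.sqrt (x.1^2 + x.2^2) * Real.cos (θ + Real.arctan ((-Real.sin θ * x.1 + Real.cos θ * x.2) / (Real.cos θ * x.1 + Real.sin θ * x.2))), Real.sqrt (x.1^2 + x.2^2) * Real.sin (θ + Real.arctan ((-Real.sin θ * x.1 + Real.cos θ * x.2) / (Real.cos θ * x.1 + Real.sin θ * x.2)))) := by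
      exact Prod.ext h1.symm h2.symm
    rw [hxeq, hQ _ _ hρpos hρR, combo_eq]
    rw [← hxeq]
  have heqQ : Q =ᶠ[nhds x₀]
      (fun x : ℝ × ℝ =>
      !![-(w₀ (Real.sqrt (x.1^2 + x.2^2)))/Real.sqrt 6 + (w₁ (Real.sqrt (x.1^2 + x.2^2)) * Real.cos ((k:ℝ) * (θ + Real.arctan ((-Real.sin θ * x.1 + Real.cos θ * x.2) / (Real.cos θ * x.1 + Real.sin θ * x.2)))) - w₂ (Real.sqrt (x.1^2 + x.2^2)) * Real.sin ((k:ℝ) * (θ + Real.arctan ((-Real.sin θ * x.1 + Real.cos θ * x.2) / (Real.cos θ * x.1 + Real.sin θ * x.2)))))/Real.sqrt 2,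
          (w₁ (Real.sqrt (x.1^2 + x.2^2)) * Real.sin ((k:ℝ) * (θ + Real.arctan ((-Real.sin θ * x.1 + Real.cos θ * x.2) / (Real.cos θ * x.1 + Real.sin θ * x.2)))) + w₂ (Real.sqrt (x.1^2 + x.2^2)) * Real.cos ((k:ℝ) * (θ + Real.arctan ((-Real.sin θ * x.1 + Real.cos θ * x.2) / (Real.cos θ * x.1 + Real.sin θ * x.2)))))/Real.sqrt 2, 0;
          (w₁ (Real.sqrt (x.1^2 + x.2^2)) * Real.sin ((k:ℝ) * (θ + Real.arctan ((-Real.sin θ * x.1 + Real.cos θ * x.2) / (Real.cos θ * x.1 + Real.sin θ * x.2)))) + w₂ (Real.sqrt (x.1^2 + x.2^2)) * Real.cos ((k:ℝ) * (θ + Real.arctan ((-Real.sin θ * x.1 + Real.cos θ * x.2) / (Real.cos θ * x.1 + Real.sin θ * x.2)))))/Real.sqrt 2,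
          -(w₀ (Real.sqrt (x.1^2 + x.2^2)))/Real.sqrt 6 - (w₁ (Real.sqrt (x.1^2 + x.2^2)) * Real.cos ((k:ℝ) * (θ + Real.arctan ((-Real.sin θ * x.1 + Real.cos θ * x.2) / (Real.cos θ * x.1 + Real.sin θ * x.2)))) - w₂ (Real.sqrt (x.1^2 + x.2^2)) * Real.sin ((k:ℝ) * (θ + Real.arctan ((-Real.sin θ * x.1 + Real.cos θ * x.2) / (Real.cos θ * x.1 + Real.sin θ * x.2)))))/Real.sqrt 2, 0;
          0, 0, 2*(w₀ (Real.sqrt (x.1^2 + x.2^2)))/Real.sqrt 6]) :=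
    Filter.eventuallyEq_of_mem (hNopen.mem_nhds hx₀N) key
  -- entrywise eventual equalities
  have h00 : (fun x => Q x 0 0) =ᶠ[nhds x₀] (fun x : ℝ × ℝ => -(w₀ (Real.sqrt (x.1^2 + x.2^2))) * (Real.sqrt 6)⁻¹ + (w₁ (Real.sqrt (x.1^2 + x.2^2)) * Real.cos ((k:ℝ) * (θ + Real.arctan ((-Real.sin θ * x.1 + Real.cos θ * x.2) / (Real.cos θ * x.1 + Real.sin θ * x.2)))) - w₂ (Real.sqrt (x.1^2 + x.2^2)) * Real.sin ((k:ℝ) * (θ + Real.arctan ((-Real.sin θ * x.1 + Real.cos θ * x.2) / (Real.cos θ * x.1 + Real.sin θ * x.2))))) * (Real.sqrt 2)⁻¹) :=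
    heqQ.mono (fun x hx => by
      simp only [hx]
      norm_num [Matrix.cons_val', Matrix.cons_val_zero, Matrix.cons_val_one, Matrix.head_cons,
        Matrix.empty_val', Matrix.cons_val_fin_one, Matrix.head_fin_const, Matrix.cons_val_two, Matrix.tail_cons]
      ring)
  have h01 : (fun x => Q x 0 1) =ᶠ[nhds x₀] (fun x : ℝ × ℝ => (w₁ (Real.sqrt (x.1^2 + x.2^2)) * Real.sin ((k:ℝ) * (θ + Real.arctan ((-Real.sin θ * x.1 + Real.cos θ * x.2) / (Real.cos θ * x.1 + Real.sin θ * x.2)))) + w₂ (Real.sqrt (x.1^2 + x.2^2)) * Real.cos ((k:ℝ) * (θ + Real.arctan ((-Real.sin θ * x.1 + Real.cos θ * x.2) / (Real.cos θ * x.1 + Real.sin θ * x.2))))) * (Real.sqrt 2)⁻¹) :=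
    heqQ.mono (fun x hx => by
      simp only [hx]
      norm_num [Matrix.cons_val', Matrix.cons_val_zero, Matrix.cons_val_one, Matrix.head_cons,
        Matrix.empty_val', Matrix.cons_val_fin_one, Matrix.head_fin_const, Matrix.cons_val_two, Matrix.tail_cons]
      ring)
  have h10 : (fun x => Q x 1 0) =ᶠ[nhds x₀] (fun x : ℝ × ℝ => (w₁ (Real.sqrt (x.1^2 + x.2^2)) * Real.sin ((k:ℝ) * (θ + Real.arctan ((-Real.sin θ * x.1 + Real.cos θ * x.2) / (Real.cos θ * x.1 + Real.sin θ * x.2)))) + w₂ (Real.sqrt (x.1^2 + x.2^2)) * Real.cos ((k:ℝ) * (θ + Real.arctan ((-Real.sin θ * x.1 + Real.cos θ * x.2) / (Real.cos θ * x.1 + Real.sin θ * x.2))))) * (Real.sqrt 2)⁻¹) :=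
    heqQ.mono (fun x hx => by
      simp only [hx]
      norm_num [Matrix.cons_val', Matrix.cons_val_zero, Matrix.cons_val_one, Matrix.head_cons,
        Matrix.empty_val', Matrix.cons_val_fin_one, Matrix.head_fin_const, Matrix.cons_val_two, Matrix.tail_cons]
      ring)
  have h11 : (fun x => Q x 1 1) =ᶠ[nhds x₀] (fun x : ℝ × ℝ => -(w₀ (Real.sqrt (x.1^2 + x.2^2))) * (Real.sqrt 6)⁻¹ - (w₁ (Real.sqrt (x.1^2 + x.2^2)) * Real.cos ((k:ℝ) * (θ + Real.arctan ((-Real.sin θ * x.1 + Real.cos θ * x.2) / (Real.cos θ * x.1 + Real.sin θ * x.2)))) - w₂ (Real.sqrt (x.1^2 + x.2^2)) * Real.sin ((k:ℝ) * (θ + Real.arctan ((-Real.sin θ * x.1 + Real.cos θ * x.2) / (Real.cos θ * x.1 + Real.sin θ * x.2))))) * (Real.sqrt 2)⁻¹) :=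
    heqQ.mono (fun x hx => by
      simp only [hx]
      norm_num [Matrix.cons_val', Matrix.cons_val_zero, Matrix.cons_val_one, Matrix.head_cons,
        Matrix.empty_val', Matrix.cons_val_fin_one, Matrix.head_fin_const, Matrix.cons_val_two, Matrix.tail_cons]
      ring)
  have h22 : (fun x => Q x 2 2) =ᶠ[nhds x₀] (fun x : ℝ × ℝ => 2 * w₀ (Real.sqrt (x.1^2 + x.2^2)) * (Real.sqrt 6)⁻¹) :=
    heqQ.mono (fun x hx => by
      simp only [hx]
      norm_num [Matrix.cons_val', Matrix.cons_val_zero, Matrix.cons_val_one, Matrix.head_cons,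
        Matrix.empty_val', Matrix.cons_val_fin_one, Matrix.head_fin_const, Matrix.cons_val_two, Matrix.tail_cons]
      ring)
  have h02 : (fun x => Q x 0 2) =ᶠ[nhds x₀] (fun _ : ℝ × ℝ => (0:ℝ)) :=
    heqQ.mono (fun x hx => by
      simp only [hx]
      norm_num [Matrix.cons_val', Matrix.cons_val_zero, Matrix.cons_val_one, Matrix.head_cons,
        Matrix.empty_val', Matrix.cons_val_fin_one, Matrix.head_fin_const, Matrix.cons_val_two, Matrix.tail_cons])
  have h12 : (fun x => Q x 1 2) =ᶠ[nhds x₀] (fun _ : ℝ × ℝ => (0:ℝ)) :=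
    heqQ.mono (fun x hx => by
      simp only [hx]
      norm_num [Matrix.cons_val', Matrix.cons_val_zero, Matrix.cons_val_one, Matrix.head_cons,
        Matrix.empty_val', Matrix.cons_val_fin_one, Matrix.head_fin_const, Matrix.cons_val_two, Matrix.tail_cons])
  have h20 : (fun x => Q x 2 0) =ᶠ[nhds x₀] (fun _ : ℝ × ℝ => (0:ℝ)) :=
    heqQ.mono (fun x hx => by
      simp only [hx]
      norm_num [Matrix.cons_val', Matrix.cons_val_zero, Matrix.cons_val_one, Matrix.head_cons,
        Matrix.empty_val', Matrix.cons_val_fin_one, Matrix.head_fin_const, Matrix.cons_val_two, Matrix.tail_cons])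
  have h21 : (fun x => Q x 2 1) =ᶠ[nhds x₀] (fun _ : ℝ × ℝ => (0:ℝ)) :=
    heqQ.mono (fun x hx => by
      simp only [hx]
      norm_num [Matrix.cons_val', Matrix.cons_val_zero, Matrix.cons_val_one, Matrix.head_cons,
        Matrix.empty_val', Matrix.cons_val_fin_one, Matrix.head_fin_const, Matrix.cons_val_two, Matrix.tail_cons])
  -- derivatives of building blocks
  have hρd := hasFDerivAt_rho r θ hr
  have hψd := hasFDerivAt_psi r θ hr
  have hρx : Real.sqrt ((r * Real.cos θ)^2 + (r * Real.sin θ)^2) = r := norm_polar r θ hr.le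
  have hψx : θ + Real.arctan ((-Real.sin θ * (r * Real.cos θ) + Real.cos θ * (r * Real.sin θ)) /
      (Real.cos θ * (r * Real.cos θ) + Real.sin θ * (r * Real.sin θ))) = θ := by
    rw [show -Real.sin θ * (r * Real.cos θ) + Real.cos θ * (r * Real.sin θ) = 0 by ring]
    simp
  have hw₀ : HasDerivAt w₀ (deriv w₀ r) r :=
    ((hd₀.differentiableOn one_ne_zero).differentiableAt
      (Ioo_mem_nhds hr hrR)).hasDerivAt
  have hw₁ : HasDerivAt w₁ (deriv w₁ r) r :=
    ((hd₁.differentiableOn one_ne_zero).differentiableAt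
      (Ioo_mem_nhds hr hrR)).hasDerivAt
  have hw₂ : HasDerivAt w₂ (deriv w₂ r) r :=
    ((hd₂.differentiableOn one_ne_zero).differentiableAt
      (Ioo_mem_nhds hr hrR)).hasDerivAt
  have hW0 : HasFDerivAt (fun x : ℝ × ℝ => w₀ (Real.sqrt (x.1^2 + x.2^2)))
      (deriv w₀ r • Lrot (Real.cos θ) (Real.sin θ)) x₀ := by
    have h1 : HasDerivAt w₀ (deriv w₀ r) ((fun x : ℝ × ℝ => Real.sqrt (x.1^2 + x.2^2)) x₀) := by
      simpa [hx₀def, hρx] using hw₀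
    exact h1.comp_hasFDerivAt x₀ hρd
  have hW1 : HasFDerivAt (fun x : ℝ × ℝ => w₁ (Real.sqrt (x.1^2 + x.2^2)))
      (deriv w₁ r • Lrot (Real.cos θ) (Real.sin θ)) x₀ := by
    have h1 : HasDerivAt w₁ (deriv w₁ r) ((fun x : ℝ × ℝ => Real.sqrt (x.1^2 + x.2^2)) x₀) := by
      simpa [hx₀def, hρx] using hw₁
    exact h1.comp_hasFDerivAt x₀ hρd
  have hW2 : HasFDerivAt (fun x : ℝ × ℝ => w₂ (Real.sqrt (x.1^2 + x.2^2)))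
      (deriv w₂ r • Lrot (Real.cos θ) (Real.sin θ)) x₀ := by
    have h1 : HasDerivAt w₂ (deriv w₂ r) ((fun x : ℝ × ℝ => Real.sqrt (x.1^2 + x.2^2)) x₀) := by
      simpa [hx₀def, hρx] using hw₂
    exact h1.comp_hasFDerivAt x₀ hρd
  have hkin : HasFDerivAt (fun x : ℝ × ℝ => (k:ℝ) * (θ + Real.arctan ((-Real.sin θ * x.1 + Real.cos θ * x.2) / (Real.cos θ * x.1 + Real.sin θ * x.2))))
      ((k:ℝ) • Lrot (-Real.sin θ / r) (Real.cos θ / r)) x₀ := hψd.const_mul (k:ℝ)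
  have hKc : HasFDerivAt (fun x : ℝ × ℝ => Real.cos ((k:ℝ) * (θ + Real.arctan ((-Real.sin θ * x.1 + Real.cos θ * x.2) / (Real.cos θ * x.1 + Real.sin θ * x.2)))))
      ((-Real.sin ((k:ℝ)*θ)) • ((k:ℝ) • Lrot (-Real.sin θ / r) (Real.cos θ / r))) x₀ := by
    have hcos : HasDerivAt Real.cos (-Real.sin ((k:ℝ)*θ))
        ((fun x : ℝ × ℝ => (k:ℝ) * (θ + Real.arctan ((-Real.sin θ * x.1 + Real.cos θ * x.2) / (Real.cos θ * x.1 + Real.sin θ * x.2)))) x₀) := by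
      show HasDerivAt Real.cos (-Real.sin ((k:ℝ)*θ)) ((k:ℝ) * (θ + Real.arctan ((-Real.sin θ * (r * Real.cos θ) + Real.cos θ * (r * Real.sin θ)) / (Real.cos θ * (r * Real.cos θ) + Real.sin θ * (r * Real.sin θ)))))
      rw [hψx]
      exact Real.hasDerivAt_cos ((k:ℝ)*θ)
    exact hcos.comp_hasFDerivAt x₀ hkin
  have hSc : HasFDerivAt (fun x : ℝ × ℝ => Real.sin ((k:ℝ) * (θ + Real.arctan ((-Real.sin θ * x.1 + Real.cos θ * x.2) / (Real.cos θ * x.1 + Real.sin θ * x.2)))))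
      ((Real.cos ((k:ℝ)*θ)) • ((k:ℝ) • Lrot (-Real.sin θ / r) (Real.cos θ / r))) x₀ := by
    have hsin : HasDerivAt Real.sin (Real.cos ((k:ℝ)*θ))
        ((fun x : ℝ × ℝ => (k:ℝ) * (θ + Real.arctan ((-Real.sin θ * x.1 + Real.cos θ * x.2) / (Real.cos θ * x.1 + Real.sin θ * x.2)))) x₀) := by
      show HasDerivAt Real.sin (Real.cos ((k:ℝ)*θ)) ((k:ℝ) * (θ + Real.arctan ((-Real.sin θ * (r * Real.cos θ) + Real.cos θ * (r * Real.sin θ)) / (Real.cos θ * (r * Real.cos θ) + Real.sin θ * (r * Real.sin θ)))))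
      rw [hψx]
      exact Real.hasDerivAt_sin ((k:ℝ)*θ)
    exact hsin.comp_hasFDerivAt x₀ hkin
  have hU := (hW1.mul hKc).sub (hW2.mul hSc)
  have hV := (hW1.mul hSc).add (hW2.mul hKc)
  have hf00 := ((hW0.neg).mul_const ((Real.sqrt 6)⁻¹)).add (hU.mul_const ((Real.sqrt 2)⁻¹))
  have hf01 := hV.mul_const ((Real.sqrt 2)⁻¹)
  have hf11 := ((hW0.neg).mul_const ((Real.sqrt 6)⁻¹)).sub (hU.mul_const ((Real.sqrt 2)⁻¹))
  have hf22 := (hW0.const_mul (2:ℝ)).mul_const ((Real.sqrt 6)⁻¹)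
  simp only [Pi.neg_def, Pi.mul_def, Pi.sub_def, Pi.add_def] at hf00 hf01 hf11 hf22
  have hcs : Real.sin θ^2 + Real.cos θ^2 = 1 := Real.sin_sq_add_cos_sq θ
  have hCS : Real.sin ((k:ℝ)*θ)^2 + Real.cos ((k:ℝ)*θ)^2 = 1 := Real.sin_sq_add_cos_sq _
  simp only [matGradNormSq, Fin.sum_univ_three, gradNormSq]
  rw [h00.fderiv_eq, h01.fderiv_eq, h02.fderiv_eq, h10.fderiv_eq, h11.fderiv_eq,
    h12.fderiv_eq, h20.fderiv_eq, h21.fderiv_eq, h22.fderiv_eq,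
    hf00.fderiv, hf01.fderiv, hf11.fderiv, hf22.fderiv, fderiv_const_apply]
  simp only [hx₀def, ContinuousLinearMap.add_apply, ContinuousLinearMap.smul_apply,
    ContinuousLinearMap.neg_apply, ContinuousLinearMap.sub_apply, ContinuousLinearMap.coe_smul',
    Pi.smul_apply, Lrot_apply, smul_eq_mul, Pi.zero_apply, ContinuousLinearMap.zero_apply,
    hρx, hψx]
  linear_combination (6*(deriv w₀ r)^2*(Real.cos θ^2 + Real.sin θ^2))*i6
    + ((deriv w₀ r)^2 + ((deriv w₁ r)^2 + (deriv w₂ r)^2 + (k:ℝ)^2*((w₁ r)^2+(w₂ r)^2)/r^2)*(Real.cos ((k:ℝ)*θ)^2 + Real.sin ((k:ℝ)*θ)^2))*hcs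
    + (2*(Real.cos θ^2 + Real.sin θ^2)*(Real.cos ((k:ℝ)*θ)^2 + Real.sin ((k:ℝ)*θ)^2)*((deriv w₁ r)^2 + (deriv w₂ r)^2 + (k:ℝ)^2*((w₁ r)^2+(w₂ r)^2)/r^2))*i2
    + ((deriv w₁ r)^2 + (deriv w₂ r)^2 + (k:ℝ)^2*((w₁ r)^2+(w₂ r)^2)/r^2)*hCS

end
end Stmt11Aux

open Stmt11Aux MeasureTheory in
/-- the Landau–de Gennes energy of a `k`-radially symmetric map on `B_R`
reduces to a one-dimensional weighted integral. -/
theorem stmt11 (a2 b2 c2 : ℝ) (ha : 0 < a2) (hb : 0 < b2) (hc : 0 < c2)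
    (k : ℤ) (hk : k ≠ 0) (R : ℝ) (hR : 0 < R)
    (w₀ w₁ w₂ : ℝ → ℝ)
    (hc₀ : ContinuousOn w₀ (Set.Icc 0 R)) (hc₁ : ContinuousOn w₁ (Set.Icc 0 R))
    (hc₂ : ContinuousOn w₂ (Set.Icc 0 R))
    (hd₀ : ContDiffOn ℝ 1 w₀ (Set.Ioo 0 R)) (hd₁ : ContDiffOn ℝ 1 w₁ (Set.Ioo 0 R))
    (hd₂ : ContDiffOn ℝ 1 w₂ (Set.Ioo 0 R))
    (hint1 : MeasureTheory.IntegrableOn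
      (fun r => ((deriv w₀ r)^2 + (deriv w₁ r)^2 + (deriv w₂ r)^2) * r) (Set.Ioo 0 R))
    (hint2 : MeasureTheory.IntegrableOn
      (fun r => ((w₁ r)^2 + (w₂ r)^2) / r) (Set.Ioo 0 R))
    (Q : ℝ × ℝ → Mat3)
    (hQ : ∀ r φ : ℝ, 0 < r → r < R →
      Q (r * Real.cos φ, r * Real.sin φ) = w₀ r • E0 + w₁ r • E1 k φ + w₂ r • E2mat k φ) :
    ∫ x in {x : ℝ × ℝ | Real.sqrt (x.1^2 + x.2^2) < R},
        ((1/2) * matGradNormSq Q x + fbulk a2 b2 c2 (Q x)) =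
      2 * Real.pi * ∫ r in Set.Ioo (0 : ℝ) R,
        ((1/2) * ((deriv w₀ r)^2 + (deriv w₁ r)^2 + (deriv w₂ r)^2
              + (k : ℝ)^2 / r^2 * ((w₁ r)^2 + (w₂ r)^2))
          - a2/2 * ((w₀ r)^2 + (w₁ r)^2 + (w₂ r)^2)
          + c2/4 * ((w₀ r)^2 + (w₁ r)^2 + (w₂ r)^2)^2
          - b2 / (3 * Real.sqrt 6) * (w₀ r * ((w₀ r)^2 - 3 * ((w₁ r)^2 + (w₂ r)^2)))) * r := by
  set G : ℝ → ℝ := fun r =>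
        ((1/2) * ((deriv w₀ r)^2 + (deriv w₁ r)^2 + (deriv w₂ r)^2
              + (k : ℝ)^2 / r^2 * ((w₁ r)^2 + (w₂ r)^2))
          - a2/2 * ((w₀ r)^2 + (w₁ r)^2 + (w₂ r)^2)
          + c2/4 * ((w₀ r)^2 + (w₁ r)^2 + (w₂ r)^2)^2
          - b2 / (3 * Real.sqrt 6) * (w₀ r * ((w₀ r)^2 - 3 * ((w₁ r)^2 + (w₂ r)^2)))) * r
    with hGdef
  set E : ℝ × ℝ → ℝ := fun x => (1/2) * matGradNormSq Q x + fbulk a2 b2 c2 (Q x) with hEdef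
  -- pointwise polar value
  have hpt : ∀ r θ : ℝ, 0 < r → r < R →
      r * E (r * Real.cos θ, r * Real.sin θ) = G r := by
    intro r θ hr hrR
    have h1 := grad_val k R w₀ w₁ w₂ hd₀ hd₁ hd₂ Q hQ r θ hr hrR
    have h2 : fbulk a2 b2 c2 (Q (r * Real.cos θ, r * Real.sin θ)) =
        - a2/2 * ((w₀ r)^2+(w₁ r)^2+(w₂ r)^2) + c2/4 * ((w₀ r)^2+(w₁ r)^2+(w₂ r)^2)^2
          - b2 / (3 * Real.sqrt 6) * (w₀ r * ((w₀ r)^2 - 3*((w₁ r)^2+(w₂ r)^2))) := by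
      rw [hQ r θ hr hrR]
      exact fbulk_val a2 b2 c2 k θ (w₀ r) (w₁ r) (w₂ r)
    simp only [hEdef, hGdef, h1, h2]
    ring
  have hmeas : MeasurableSet {x : ℝ × ℝ | Real.sqrt (x.1^2 + x.2^2) < R} :=
    (isOpen_lt (Real.continuous_sqrt.comp
      ((continuous_fst.pow 2).add (continuous_snd.pow 2))) continuous_const).measurableSet
  rw [← integral_indicator hmeas]
  rw [← integral_comp_polarCoord_symm
    (fun x => Set.indicator {x : ℝ × ℝ | Real.sqrt (x.1^2 + x.2^2) < R} E x)]
  have hEq : Set.EqOn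
      (fun p : ℝ × ℝ => p.1 • Set.indicator {x : ℝ × ℝ | Real.sqrt (x.1^2 + x.2^2) < R} E
        (polarCoord.symm p))
      (fun p : ℝ × ℝ => Set.indicator (Set.Ioo (0:ℝ) R) G p.1 * (fun _ : ℝ => (1:ℝ)) p.2)
      polarCoord.target := by
    intro p hp
    rw [polarCoord_target] at hp
    obtain ⟨hp1, _⟩ := hp
    simp only [Set.mem_Ioi] at hp1
    have hsymm : polarCoord.symm p = (p.1 * Real.cos p.2, p.1 * Real.sin p.2) :=
      polarCoord_symm_apply p
    have hnorm : Real.sqrt ((p.1 * Real.cos p.2)^2 + (p.1 * Real.sin p.2)^2) = p.1 :=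
      norm_polar p.1 p.2 hp1.le
    by_cases hpR : p.1 < R
    · have hmem : polarCoord.symm p ∈ {x : ℝ × ℝ | Real.sqrt (x.1^2 + x.2^2) < R} := by
        rw [hsymm]; simp only [Set.mem_setOf_eq]; rw [hnorm]; exact hpR
      simp only [Set.indicator_of_mem hmem, Set.indicator_of_mem (Set.mem_Ioo.2 ⟨hp1, hpR⟩),
        smul_eq_mul, mul_one]
      rw [hsymm]
      exact hpt p.1 p.2 hp1 hpR
    · have hmem : polarCoord.symm p ∉ {x : ℝ × ℝ | Real.sqrt (x.1^2 + x.2^2) < R} := by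
        rw [hsymm]; simp only [Set.mem_setOf_eq]; rw [hnorm]; exact not_lt.2 (not_lt.1 hpR)
      have hmem2 : p.1 ∉ Set.Ioo (0:ℝ) R := fun h => hpR h.2
      simp only [Set.indicator_of_notMem hmem, Set.indicator_of_notMem hmem2,
        smul_zero, zero_mul]
  rw [setIntegral_congr_fun polarCoord.open_target.measurableSet hEq]
  rw [polarCoord_target]
  rw [Measure.volume_eq_prod, ← Measure.prod_restrict]
  rw [integral_prod_mul (μ := volume.restrict (Set.Ioi (0:ℝ)))
    (ν := volume.restrict (Set.Ioo (-Real.pi) Real.pi))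
    (f := fun r : ℝ => Set.indicator (Set.Ioo (0:ℝ) R) G r) (g := fun _ : ℝ => (1:ℝ))]
  rw [setIntegral_indicator measurableSet_Ioo,
    Set.inter_eq_self_of_subset_right Set.Ioo_subset_Ioi_self]
  rw [integral_const, measureReal_restrict_apply_univ, Real.volume_real_Ioo_of_le (by linarith [Real.pi_pos]), smul_eq_mul, mul_one]
  ring
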